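/- Let {x_k} be nonnegative reals satisfying x_{k+1} ≤ (1 − α ε_k) x_k + C ε_k² with ε_k = ε/(k+K), where αε = 1 and K ≥ 1 with ε_0 ≤ 1/α. Then for all k ≥ 0, x_k ≤ x_0 · K/(k+K) + (4C/α²) · log(k+K)/(k+K). -/

import Mathlib

set_option maxHeartbeats 1000000 in
/-- with stepsizes `ε_k = ε/(k+K)`, `αε = 1`, `K ≥ 1`, the recursion
    `x_{k+1} ≤ (1-αε_k)x_k + Cε_k²` yields
    `x_k ≤ x_0 K/(k+K) + (4C/α²) log(k+K)/(k+K)`. -/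
theorem stmt_7 (x : ℕ → ℝ) (α C ε K : ℝ)
    (hα : 0 < α) (hC : 0 < C) (hε : α * ε = 1) (hK : 1 ≤ K)
    (hnonneg : ∀ k, 0 ≤ x k)
    (hrec : ∀ k : ℕ, x (k + 1) ≤ (1 - α * (ε / (k + K))) * x k + C * (ε / (k + K)) ^ 2) :
    ∀ k : ℕ, x k ≤ x 0 * (K / (k + K)) + (4 * C / α ^ 2) * Real.log (k + K) / (k + K) := by
  have hα' : (α:ℝ) ≠ 0 := ne_of_gt hα
  have hεval : ε = 1 / α := by field_simp; linarith [hε]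
  have hKpos : (0:ℝ) < K := lt_of_lt_of_le one_pos hK
  have hD : (0:ℝ) < C / α ^ 2 := by positivity
  set D : ℝ := C / α ^ 2 with hDdef
  intro k
  induction k with
  | zero =>
    have h1 : x 0 * (K / ((0:ℕ) + K)) = x 0 := by
      push_cast; rw [zero_add, div_self hKpos.ne']; ring
    have h2 : (0:ℝ) ≤ (4 * C / α ^ 2) * Real.log ((0:ℕ) + K) / ((0:ℕ) + K) := by
      push_cast
      rw [zero_add]
      have := Real.log_nonneg hK
      positivity
    linarith [h1, h2]
  | succ k ih =>
    set t : ℝ := (k : ℝ) + K with htdef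
    have ht1 : (1:ℝ) ≤ t := by
      have : (0:ℝ) ≤ (k:ℝ) := Nat.cast_nonneg k
      simp only [htdef]; linarith
    have ht : (0:ℝ) < t := lt_of_lt_of_le one_pos ht1
    have ht1' : (0:ℝ) < t + 1 := by linarith
    have hcast : ((k + 1 : ℕ) : ℝ) + K = t + 1 := by push_cast; simp only [htdef]; ring
    set a := x 0 with hadef
    have ha : 0 ≤ a := hnonneg 0
    set L := Real.log t with hLdef
    set M := Real.log (t + 1) with hMdef
    have hL : 0 ≤ L := Real.log_nonneg ht1
    -- log bound : L + 1/(t+1) ≤ M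
    have hM' : L * (t + 1) + 1 ≤ M * (t + 1) := by
      have hlt : (0:ℝ) < t / (t + 1) := by positivity
      have := Real.log_le_sub_one_of_pos hlt
      rw [Real.log_div ht.ne' ht1'.ne'] at this
      have heq : t / (t + 1) - 1 = -(1 / (t + 1)) := by field_simp; ring
      rw [heq] at this
      have h2 : L - M ≤ -(1 / (t + 1)) := this
      have h3 : (L - M) * (t + 1) ≤ -(1 / (t + 1)) * (t + 1) :=
        mul_le_mul_of_nonneg_right h2 ht1'.le
      have h4 : -(1 / (t + 1)) * (t + 1) = -1 := by field_simp
      rw [h4] at h3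
      nlinarith [h3]
    -- the recursion specialized
    have hstep : x (k + 1) ≤ (1 - 1 / t) * x k + D / t ^ 2 := by
      have h := hrec k
      have e1 : α * (ε / ((k:ℝ) + K)) = 1 / t := by
        rw [← mul_div_assoc, hε]
      have e2 : C * (ε / ((k:ℝ) + K)) ^ 2 = D / t ^ 2 := by
        rw [hεval, hDdef, htdef]
        field_simp
      rw [e1, e2] at h
      exact h
    -- apply IH
    have hcoef : 0 ≤ 1 - 1 / t := by
      have : 1 / t ≤ 1 := by
        rw [div_le_one ht]; exact ht1
      linarith
    have hB : x k ≤ a * (K / t) + (4 * C / α ^ 2) * L / t := ih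
    have hbound : x (k + 1) ≤ (1 - 1 / t) * (a * (K / t) + (4 * C / α ^ 2) * L / t) + D / t ^ 2 := by
      calc x (k + 1) ≤ (1 - 1 / t) * x k + D / t ^ 2 := hstep
        _ ≤ (1 - 1 / t) * (a * (K / t) + (4 * C / α ^ 2) * L / t) + D / t ^ 2 := by
            have := mul_le_mul_of_nonneg_left hB hcoef
            linarith
    have h4D : (4 : ℝ) * C / α ^ 2 = 4 * D := by rw [hDdef]; ring
    -- express bound as a single fraction
    have heq1 : (1 - 1 / t) * (a * (K / t) + (4 * C / α ^ 2) * L / t) + D / t ^ 2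
        = ((t - 1) * (t + 1) * (a * K + 4 * D * L) + D * (t + 1)) / (t ^ 2 * (t + 1)) := by
      rw [h4D]
      field_simp
    have heq2 : a * (K / (t + 1)) + (4 * C / α ^ 2) * M / (t + 1)
        = (t ^ 2 * (a * K + 4 * D * M)) / (t ^ 2 * (t + 1)) := by
      rw [h4D]
      field_simp
    -- key polynomial inequality
    have key : (t - 1) * (t + 1) * (a * K + 4 * D * L) + D * (t + 1)
        ≤ t ^ 2 * (a * K + 4 * D * M) := by
      have key' : ((t - 1) * (t + 1) * (a * K + 4 * D * L) + D * (t + 1)) * (t + 1)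
          ≤ (t ^ 2 * (a * K + 4 * D * M)) * (t + 1) := by
        have hM2 : 4 * D * t ^ 2 * (L * (t + 1) + 1) ≤ 4 * D * t ^ 2 * (M * (t + 1)) := by
          apply mul_le_mul_of_nonneg_left hM'
          positivity
        nlinarith [hM2, mul_nonneg (mul_nonneg ha hKpos.le) ht1'.le,
          mul_nonneg (mul_nonneg hD.le hL) ht1'.le,
          mul_nonneg hD.le (mul_nonneg (by linarith : (0:ℝ) ≤ 3 * t + 1)
            (by linarith : (0:ℝ) ≤ t - 1))]
      exact le_of_mul_le_mul_right key' ht1'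
    have hfrac : ((t - 1) * (t + 1) * (a * K + 4 * D * L) + D * (t + 1)) / (t ^ 2 * (t + 1))
        ≤ (t ^ 2 * (a * K + 4 * D * M)) / (t ^ 2 * (t + 1)) := by
      gcongr
    rw [hcast]
    calc x (k + 1) ≤ ((t - 1) * (t + 1) * (a * K + 4 * D * L) + D * (t + 1)) / (t ^ 2 * (t + 1)) := by
          rw [← heq1]; exact hbound
      _ ≤ (t ^ 2 * (a * K + 4 * D * M)) / (t ^ 2 * (t + 1)) := hfrac
      _ = a * (K / (t + 1)) + (4 * C / α ^ 2) * M / (t + 1) := heq2.symm
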